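/- Let Q and H be symmetric positive semidefinite real n×n matrices and C > 0 a constant such that (1/C)⟨Qξ,ξ⟩ ≤ ⟨Hξ,ξ⟩ ≤ C⟨Qξ,ξ⟩ for all ξ ∈ ℝⁿ. Let p > 1, a > 1, γ > 1, ψ > 1, δ > 1 be constants and b, c, d, e, f, g, h ≥ 0 real numbers. Suppose A : ℝ×ℝⁿ → ℝⁿ, Ã : ℝ×ℝⁿ → ℝⁿ and B : ℝ×ℝⁿ → ℝ satisfy, for all (z,ξ) ∈ ℝ×ℝⁿ: A(z,ξ) = √Q·Ã(z,ξ); ξ·A(z,ξ) ≥ a⁻¹|√Q·ξ|^p − h|z|^γ − g; |Ã(z,ξ)| ≤ a|√Q·ξ|^{p−1} + b|z|^{γ−1} + e; and |B(z,ξ)| ≤ c|√Q·ξ|^{ψ−1} + d|z|^{δ−1} + f. Then there exists Â : ℝ×ℝⁿ → ℝⁿ such that for all (z,ξ) ∈ ℝ×ℝⁿ: A(z,ξ) = √H·Â(z,ξ); ξ·A(z,ξ) ≥ (C^{p/2}a)⁻¹|√H·ξ|^p − h|z|^γ − g; |Â(z,ξ)| ≤ C^{p/2}a|√H·ξ|^{p−1}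 + C^{1/2}b|z|^{γ−1} + C^{1/2}e; and |B(z,ξ)| ≤ C^{(ψ−1)/2}c|√H·ξ|^{ψ−1} + d|z|^{δ−1} + f. That is, the structural conditions are invariant under replacing Q by an equivalent symmetric nonnegative semidefinite matrix H, with constants modified by powers of C. -/

import Mathlib

open Matrix

/-- The positive semidefinite square root of a positive semidefinite matrix
(removed from Mathlib; restored with its December 2024 definition). -/
noncomputable def Matrix.PosSemidef.sqrt {n : Type*} [Fintype n] [DecidableEq n]
    {A : Matrix n n ℝ} (hA : A.PosSemidef) : Matrix n n ℝ :=
  hA.1.eigenvectorUnitary.1 * diagonal ((↑) ∘ (fun x : ℝ => Real.sqrt x) ∘ hA.1.eigenvalues) *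
  (star hA.1.eigenvectorUnitary : Matrix n n ℝ)

open scoped RealInnerProductSpace

lemma Matrix.PosSemidef.posSemidef_sqrt {n : Type*} [Fintype n] [DecidableEq n]
    {A : Matrix n n ℝ} (hA : A.PosSemidef) : hA.sqrt.PosSemidef := by
  unfold Matrix.PosSemidef.sqrt
  have hD : (diagonal ((↑) ∘ (fun x : ℝ => Real.sqrt x) ∘ hA.1.eigenvalues) :
      Matrix n n ℝ).PosSemidef :=
    posSemidef_diagonal_iff.mpr fun i => Real.sqrt_nonneg _
  simpa [star_eq_conjTranspose] using
    hD.mul_mul_conjTranspose_same (hA.1.eigenvectorUnitary : Matrix n n ℝ)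

lemma Matrix.PosSemidef.sqrt_mul_self {n : Type*} [Fintype n] [DecidableEq n]
    {A : Matrix n n ℝ} (hA : A.PosSemidef) : hA.sqrt * hA.sqrt = A := by
  unfold Matrix.PosSemidef.sqrt
  have hU : (star hA.1.eigenvectorUnitary : Matrix n n ℝ) * hA.1.eigenvectorUnitary.1 = 1 :=
    Unitary.coe_star_mul_self _
  have hDD : (diagonal ((↑) ∘ (fun x : ℝ => Real.sqrt x) ∘ hA.1.eigenvalues) : Matrix n n ℝ) *
      diagonal ((↑) ∘ (fun x : ℝ => Real.sqrt x) ∘ hA.1.eigenvalues) =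
      diagonal (RCLike.ofReal ∘ hA.1.eigenvalues) := by
    rw [diagonal_mul_diagonal]; congr 1; funext i
    simp [Real.mul_self_sqrt (hA.eigenvalues_nonneg i)]
  conv_rhs => rw [hA.1.spectral_theorem, Unitary.conjStarAlgAut_apply]
  simp only [mul_assoc]
  rw [← mul_assoc (star hA.1.eigenvectorUnitary : Matrix n n ℝ) hA.1.eigenvectorUnitary.1, hU,
    one_mul, ← mul_assoc (diagonal _) (diagonal _), hDD]

/-- The Euclidean norm of a vector in `ℝⁿ`, written via the dot product. -/
noncomputable def euclNorm {n : ℕ} (x : Fin n → ℝ) : ℝ := Real.sqrt (x ⬝ᵥ x)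

namespace Stmt13Aux

noncomputable def toE {n : ℕ} (x : Fin n → ℝ) : EuclideanSpace ℝ (Fin n) :=
  (WithLp.equiv 2 _).symm x

lemma inner_toE {n : ℕ} (x y : Fin n → ℝ) : ⟪toE x, toE y⟫ = x ⬝ᵥ y := by
  rw [EuclideanSpace.inner_eq_star_dotProduct]
  simp [toE, dotProduct, mul_comm]

lemma euclNorm_eq {n : ℕ} (x : Fin n → ℝ) : euclNorm x = ‖toE x‖ := by
  rw [euclNorm, ← inner_toE, real_inner_self_eq_norm_sq]
  simp [Real.sqrt_sq (norm_nonneg _)]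

lemma euclNorm_nonneg {n : ℕ} (x : Fin n → ℝ) : 0 ≤ euclNorm x := Real.sqrt_nonneg _

lemma cauchy {n : ℕ} (x y : Fin n → ℝ) : x ⬝ᵥ y ≤ euclNorm x * euclNorm y := by
  rw [← inner_toE, euclNorm_eq, euclNorm_eq]
  exact real_inner_le_norm _ _

lemma sqrt_dot {n : ℕ} {Q : Matrix (Fin n) (Fin n) ℝ} (hQ : Q.PosSemidef) (ξ : Fin n → ℝ) :
    (hQ.sqrt *ᵥ ξ) ⬝ᵥ (hQ.sqrt *ᵥ ξ) = Q *ᵥ ξ ⬝ᵥ ξ := by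
  have hs : hQ.sqrt.transpose = hQ.sqrt := by
    have := hQ.posSemidef_sqrt.1
    rwa [Matrix.IsHermitian, conjTranspose_eq_transpose_of_trivial] at this
  rw [Matrix.dotProduct_mulVec, ← Matrix.mulVec_transpose, hs, mulVec_mulVec,
    hQ.sqrt_mul_self]

lemma euclNorm_sqrt_sq {n : ℕ} {Q : Matrix (Fin n) (Fin n) ℝ} (hQ : Q.PosSemidef)
    (ξ : Fin n → ℝ) : euclNorm (hQ.sqrt *ᵥ ξ) = Real.sqrt (Q *ᵥ ξ ⬝ᵥ ξ) := by
  rw [euclNorm, sqrt_dot]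

lemma range_le_aux {n : ℕ} (U : EuclideanSpace ℝ (Fin n) →ₗ[ℝ] EuclideanSpace ℝ (Fin n))
    (hU : U.IsSymmetric) : LinearMap.range U ≤ (LinearMap.ker U)ᗮ := by
  rintro _ ⟨w, rfl⟩
  rw [Submodule.mem_orthogonal]
  intro u hu
  rw [LinearMap.mem_ker] at hu
  rw [← hU u w, hu, inner_zero_left]

lemma range_le {n : ℕ} (S T : EuclideanSpace ℝ (Fin n) →ₗ[ℝ] EuclideanSpace ℝ (Fin n))
    (hS : S.IsSymmetric) (hT : T.IsSymmetric) (hker : LinearMap.ker T ≤ LinearMap.ker S) :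
    LinearMap.range S ≤ LinearMap.range T := by
  have h3 : LinearMap.range T = (LinearMap.ker T)ᗮ := by
    refine Submodule.eq_of_le_of_finrank_eq (range_le_aux T hT) ?_
    have h1 := LinearMap.finrank_range_add_finrank_ker T
    have h2 := Submodule.finrank_add_finrank_orthogonal (LinearMap.ker T)
    omega
  calc LinearMap.range S ≤ (LinearMap.ker S)ᗮ := range_le_aux S hS
    _ ≤ (LinearMap.ker T)ᗮ := Submodule.orthogonal_le hker
    _ = LinearMap.range T := h3.symm

lemma dot_self_nonneg {n : ℕ} (x : Fin n → ℝ) : 0 ≤ x ⬝ᵥ x :=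
  Finset.sum_nonneg fun i _ => mul_self_nonneg _

/-- The key construction: a preimage under `√H` of `√Q *ᵥ w` with controlled norm. -/
lemma construct {n : ℕ} {Q H : Matrix (Fin n) (Fin n) ℝ} (hQ : Q.PosSemidef)
    (hH : H.PosSemidef) {C : ℝ} (hC : 0 < C)
    (hequiv : ∀ ξ : Fin n → ℝ,
      (1 / C) * (Q.mulVec ξ ⬝ᵥ ξ) ≤ H.mulVec ξ ⬝ᵥ ξ ∧
        H.mulVec ξ ⬝ᵥ ξ ≤ C * (Q.mulVec ξ ⬝ᵥ ξ))
    (w : Fin n → ℝ) :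
    ∃ u : Fin n → ℝ, hH.sqrt *ᵥ u = hQ.sqrt *ᵥ w ∧
      euclNorm u ≤ Real.sqrt C * euclNorm w := by
  -- quadratic forms are nonnegative and comparable
  have hQnn : ∀ ξ : Fin n → ℝ, 0 ≤ Q *ᵥ ξ ⬝ᵥ ξ := fun ξ => by
    rw [← sqrt_dot hQ]; exact dot_self_nonneg _
  have hHnn : ∀ ξ : Fin n → ℝ, 0 ≤ H *ᵥ ξ ⬝ᵥ ξ := fun ξ => by
    rw [← sqrt_dot hH]; exact dot_self_nonneg _
  have hQle : ∀ ξ : Fin n → ℝ, Q *ᵥ ξ ⬝ᵥ ξ ≤ C * (H *ᵥ ξ ⬝ᵥ ξ) := by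
    intro ξ
    have := (hequiv ξ).1
    rw [div_mul_eq_mul_div, one_mul, div_le_iff₀ hC] at this
    linarith [this]
  -- linear maps
  set SQ := Matrix.toEuclideanLin hQ.sqrt with hSQ
  set TH := Matrix.toEuclideanLin H with hTH
  have hSQsymm : SQ.IsSymmetric :=
    (Matrix.isHermitian_iff_isSymmetric).mp hQ.posSemidef_sqrt.1
  have hTHsymm : TH.IsSymmetric := (Matrix.isHermitian_iff_isSymmetric).mp hH.1
  have happS : ∀ x : Fin n → ℝ, SQ (toE x) = toE (hQ.sqrt *ᵥ x) := by
    intro x; rw [hSQ, Matrix.toEuclideanLin_apply]; simp [toE]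
  have happT : ∀ x : Fin n → ℝ, TH (toE x) = toE (H *ᵥ x) := by
    intro x; rw [hTH, Matrix.toEuclideanLin_apply]; simp [toE]
  have htoE_inj : Function.Injective (toE (n := n)) :=
    (WithLp.equiv 2 _).symm.injective
  have hker : LinearMap.ker TH ≤ LinearMap.ker SQ := by
    intro x hx
    rw [LinearMap.mem_ker] at hx ⊢
    set x' : Fin n → ℝ := WithLp.equiv 2 _ x with hx'
    have hxx : toE x' = x := by simp [toE, hx']
    rw [← hxx, happT] at hx
    have hHx : H *ᵥ x' ⬝ᵥ x' = 0 := by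
      have : H *ᵥ x' = 0 := by
        have := htoE_inj (a₂ := 0) (by simpa [toE] using hx)
        simpa using this
      simp [this]
    have hQx : Q *ᵥ x' ⬝ᵥ x' = 0 :=
      le_antisymm (by have := hQle x'; rw [hHx] at this; linarith) (hQnn x')
    have hsq : hQ.sqrt *ᵥ x' = 0 := by
      have : (hQ.sqrt *ᵥ x') ⬝ᵥ (hQ.sqrt *ᵥ x') = 0 := by rw [sqrt_dot hQ, hQx]
      exact dotProduct_self_eq_zero.mp this
    rw [← hxx, happS, hsq]
    simp [toE]
  have hrange : LinearMap.range SQ ≤ LinearMap.range TH :=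
    range_le SQ TH hSQsymm hTHsymm hker
  -- get preimage
  obtain ⟨x, hx⟩ := hrange ⟨toE w, happS w⟩
  set x' : Fin n → ℝ := WithLp.equiv 2 _ x with hx'def
  have hxx : toE x' = x := by simp [toE, hx'def]
  have hHx : H *ᵥ x' = hQ.sqrt *ᵥ w := by
    apply htoE_inj
    rw [← happT x', hxx, hx]
  refine ⟨hH.sqrt *ᵥ x', ?_, ?_⟩
  · rw [mulVec_mulVec, hH.sqrt_mul_self, hHx]
  · -- norm bound
    set u : Fin n → ℝ := hH.sqrt *ᵥ x' with hu
    have huv : u ⬝ᵥ u = H *ᵥ x' ⬝ᵥ x' := sqrt_dot hH x'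
    have hsym : hQ.sqrt.transpose = hQ.sqrt := by
      have := hQ.posSemidef_sqrt.1
      rwa [Matrix.IsHermitian, conjTranspose_eq_transpose_of_trivial] at this
    have hdot : H *ᵥ x' ⬝ᵥ x' = w ⬝ᵥ (hQ.sqrt *ᵥ x') := by
      rw [hHx, Matrix.dotProduct_mulVec, ← Matrix.mulVec_transpose, hsym]
    have hCS : w ⬝ᵥ (hQ.sqrt *ᵥ x') ≤ euclNorm w * euclNorm (hQ.sqrt *ᵥ x') :=
      cauchy _ _
    have hNQx : euclNorm (hQ.sqrt *ᵥ x') ≤ Real.sqrt C * euclNorm u := by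
      rw [euclNorm_sqrt_sq hQ]
      calc Real.sqrt (Q *ᵥ x' ⬝ᵥ x') ≤ Real.sqrt (C * (u ⬝ᵥ u)) := by
            apply Real.sqrt_le_sqrt; rw [huv]; exact hQle x'
        _ = Real.sqrt C * euclNorm u := by rw [Real.sqrt_mul hC.le, euclNorm]
    have hu2 : euclNorm u * euclNorm u = u ⬝ᵥ u := Real.mul_self_sqrt (dot_self_nonneg u)
    have key : euclNorm u * euclNorm u ≤ (Real.sqrt C * euclNorm w) * euclNorm u := by
      rw [hu2, huv, hdot]
      calc w ⬝ᵥ (hQ.sqrt *ᵥ x') ≤ euclNorm w * euclNorm (hQ.sqrt *ᵥ x') := hCS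
        _ ≤ euclNorm w * (Real.sqrt C * euclNorm u) :=
            mul_le_mul_of_nonneg_left hNQx (euclNorm_nonneg w)
        _ = (Real.sqrt C * euclNorm w) * euclNorm u := by ring
    rcases eq_or_lt_of_le (euclNorm_nonneg u) with h0 | h0
    · rw [← h0]
      exact mul_nonneg (Real.sqrt_nonneg _) (euclNorm_nonneg w)
    · exact le_of_mul_le_mul_right key h0

lemma rpow_comp {x y C r : ℝ} (hx : 0 ≤ x) (hC : 0 ≤ C) (hy : 0 ≤ y)
    (hxy : x ≤ Real.sqrt C * y) (hr : 0 ≤ r) : x ^ r ≤ C ^ (r / 2) * y ^ r := by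
  calc x ^ r ≤ (Real.sqrt C * y) ^ r := Real.rpow_le_rpow hx hxy hr
    _ = (Real.sqrt C) ^ r * y ^ r := Real.mul_rpow (Real.sqrt_nonneg _) hy
    _ = C ^ (r / 2) * y ^ r := by
        rw [Real.sqrt_eq_rpow, ← Real.rpow_mul hC, show (1/2:ℝ)*r = r/2 by ring]

end Stmt13Aux

open Stmt13Aux

/-- The structural conditions are invariant under replacing `Q` by an
equivalent symmetric nonnegative semidefinite matrix `H`, with constants modified by powers
of the equivalence constant `C`. -/
theorem stmt13 {n : ℕ} (Q H : Matrix (Fin n) (Fin n) ℝ)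
    (hQ : Q.PosSemidef) (hH : H.PosSemidef) (C : ℝ) (hC : 0 < C)
    (hequiv : ∀ ξ : Fin n → ℝ,
      (1 / C) * (Q.mulVec ξ ⬝ᵥ ξ) ≤ H.mulVec ξ ⬝ᵥ ξ ∧
        H.mulVec ξ ⬝ᵥ ξ ≤ C * (Q.mulVec ξ ⬝ᵥ ξ))
    (p a γ ψ δ : ℝ) (hp : 1 < p) (ha : 1 < a) (hγ : 1 < γ) (hψ : 1 < ψ) (hδ : 1 < δ)
    (b c d e f g h : ℝ) (hb : 0 ≤ b) (hc : 0 ≤ c) (hd : 0 ≤ d) (he : 0 ≤ e)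
    (hf : 0 ≤ f) (hg : 0 ≤ g) (hh : 0 ≤ h)
    (A Atil : ℝ → (Fin n → ℝ) → (Fin n → ℝ)) (B : ℝ → (Fin n → ℝ) → ℝ)
    (hstr1 : ∀ (z : ℝ) (ξ : Fin n → ℝ), A z ξ = hQ.sqrt.mulVec (Atil z ξ))
    (hstr2 : ∀ (z : ℝ) (ξ : Fin n → ℝ),
      a⁻¹ * euclNorm (hQ.sqrt.mulVec ξ) ^ p - h * |z| ^ γ - g ≤ ξ ⬝ᵥ A z ξ)
    (hstr3 : ∀ (z : ℝ) (ξ : Fin n → ℝ),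
      euclNorm (Atil z ξ) ≤ a * euclNorm (hQ.sqrt.mulVec ξ) ^ (p - 1) + b * |z| ^ (γ - 1) + e)
    (hstr4 : ∀ (z : ℝ) (ξ : Fin n → ℝ),
      |B z ξ| ≤ c * euclNorm (hQ.sqrt.mulVec ξ) ^ (ψ - 1) + d * |z| ^ (δ - 1) + f) :
    ∃ Ahat : ℝ → (Fin n → ℝ) → (Fin n → ℝ),
      (∀ (z : ℝ) (ξ : Fin n → ℝ), A z ξ = hH.sqrt.mulVec (Ahat z ξ)) ∧
      (∀ (z : ℝ) (ξ : Fin n → ℝ),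
        (C ^ (p / 2) * a)⁻¹ * euclNorm (hH.sqrt.mulVec ξ) ^ p - h * |z| ^ γ - g ≤
          ξ ⬝ᵥ A z ξ) ∧
      (∀ (z : ℝ) (ξ : Fin n → ℝ),
        euclNorm (Ahat z ξ) ≤
          C ^ (p / 2) * a * euclNorm (hH.sqrt.mulVec ξ) ^ (p - 1) +
            C ^ ((1 : ℝ) / 2) * b * |z| ^ (γ - 1) + C ^ ((1 : ℝ) / 2) * e) ∧
      (∀ (z : ℝ) (ξ : Fin n → ℝ),
        |B z ξ| ≤
          C ^ ((ψ - 1) / 2) * c * euclNorm (hH.sqrt.mulVec ξ) ^ (ψ - 1) +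
            d * |z| ^ (δ - 1) + f) := by
  -- norm comparisons
  have hQnn : ∀ ξ : Fin n → ℝ, 0 ≤ Q *ᵥ ξ ⬝ᵥ ξ := fun ξ => by
    rw [← sqrt_dot hQ]; exact dot_self_nonneg _
  have hHnn : ∀ ξ : Fin n → ℝ, 0 ≤ H *ᵥ ξ ⬝ᵥ ξ := fun ξ => by
    rw [← sqrt_dot hH]; exact dot_self_nonneg _
  have hNHle : ∀ ξ : Fin n → ℝ,
      euclNorm (hH.sqrt *ᵥ ξ) ≤ Real.sqrt C * euclNorm (hQ.sqrt *ᵥ ξ) := by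
    intro ξ
    rw [euclNorm_sqrt_sq hH, euclNorm_sqrt_sq hQ, ← Real.sqrt_mul hC.le]
    exact Real.sqrt_le_sqrt (hequiv ξ).2
  have hNQle : ∀ ξ : Fin n → ℝ,
      euclNorm (hQ.sqrt *ᵥ ξ) ≤ Real.sqrt C * euclNorm (hH.sqrt *ᵥ ξ) := by
    intro ξ
    rw [euclNorm_sqrt_sq hH, euclNorm_sqrt_sq hQ, ← Real.sqrt_mul hC.le]
    apply Real.sqrt_le_sqrt
    have := (hequiv ξ).1
    rw [div_mul_eq_mul_div, one_mul, div_le_iff₀ hC] at this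
    linarith
  have hCp : 0 < C ^ (p / 2) := Real.rpow_pos_of_pos hC _
  have ha0 : 0 < a := lt_trans one_pos ha
  -- construct Ahat
  choose u hu1 hu2 using fun z ξ => construct hQ hH hC hequiv (Atil z ξ)
  refine ⟨u, ?_, ?_, ?_, ?_⟩
  · intro z ξ
    rw [hstr1 z ξ, hu1 z ξ]
  · -- coercivity
    intro z ξ
    have h1 : euclNorm (hH.sqrt *ᵥ ξ) ^ p ≤ C ^ (p / 2) * euclNorm (hQ.sqrt *ᵥ ξ) ^ p :=
      rpow_comp (euclNorm_nonneg _) hC.le (euclNorm_nonneg _) (hNHle ξ) (by linarith)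
    have h2 : (C ^ (p / 2) * a)⁻¹ * euclNorm (hH.sqrt *ᵥ ξ) ^ p ≤
        a⁻¹ * euclNorm (hQ.sqrt *ᵥ ξ) ^ p := by
      have h3 : (C ^ (p / 2) * a)⁻¹ * euclNorm (hH.sqrt *ᵥ ξ) ^ p ≤
          (C ^ (p / 2) * a)⁻¹ * (C ^ (p / 2) * euclNorm (hQ.sqrt *ᵥ ξ) ^ p) :=
        mul_le_mul_of_nonneg_left h1 (by positivity)
      calc (C ^ (p / 2) * a)⁻¹ * euclNorm (hH.sqrt *ᵥ ξ) ^ p ≤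
          (C ^ (p / 2) * a)⁻¹ * (C ^ (p / 2) * euclNorm (hQ.sqrt *ᵥ ξ) ^ p) := h3
        _ = a⁻¹ * euclNorm (hQ.sqrt *ᵥ ξ) ^ p := by
            field_simp
    have := hstr2 z ξ
    linarith
  · -- growth bound for Ahat
    intro z ξ
    have hbd := hu2 z ξ
    have hst := hstr3 z ξ
    have hNQp : euclNorm (hQ.sqrt *ᵥ ξ) ^ (p - 1) ≤
        C ^ ((p - 1) / 2) * euclNorm (hH.sqrt *ᵥ ξ) ^ (p - 1) :=
      rpow_comp (euclNorm_nonneg _) hC.le (euclNorm_nonneg _) (hNQle ξ) (by linarith)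
    have hsC : Real.sqrt C = C ^ ((1 : ℝ) / 2) := Real.sqrt_eq_rpow C
    have hexp : C ^ ((1 : ℝ) / 2) * C ^ ((p - 1) / 2) = C ^ (p / 2) := by
      rw [← Real.rpow_add hC]
      congr 1
      ring
    have hsCnn : (0 : ℝ) ≤ Real.sqrt C := Real.sqrt_nonneg C
    calc euclNorm (u z ξ) ≤ Real.sqrt C * euclNorm (Atil z ξ) := hbd
      _ ≤ Real.sqrt C *
          (a * euclNorm (hQ.sqrt *ᵥ ξ) ^ (p - 1) + b * |z| ^ (γ - 1) + e) :=
          mul_le_mul_of_nonneg_left hst hsCnn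
      _ ≤ Real.sqrt C *
          (a * (C ^ ((p - 1) / 2) * euclNorm (hH.sqrt *ᵥ ξ) ^ (p - 1)) +
            b * |z| ^ (γ - 1) + e) := by
          apply mul_le_mul_of_nonneg_left _ hsCnn
          have : a * euclNorm (hQ.sqrt *ᵥ ξ) ^ (p - 1) ≤
              a * (C ^ ((p - 1) / 2) * euclNorm (hH.sqrt *ᵥ ξ) ^ (p - 1)) :=
            mul_le_mul_of_nonneg_left hNQp ha0.le
          linarith
      _ = C ^ (p / 2) * a * euclNorm (hH.sqrt *ᵥ ξ) ^ (p - 1) +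
          C ^ ((1 : ℝ) / 2) * b * |z| ^ (γ - 1) + C ^ ((1 : ℝ) / 2) * e := by
          rw [hsC]
          rw [mul_add, mul_add]
          congr 2
          · rw [← hexp]; ring
          · ring
  · -- bound for B
    intro z ξ
    have hst := hstr4 z ξ
    have hNQψ : euclNorm (hQ.sqrt *ᵥ ξ) ^ (ψ - 1) ≤
        C ^ ((ψ - 1) / 2) * euclNorm (hH.sqrt *ᵥ ξ) ^ (ψ - 1) :=
      rpow_comp (euclNorm_nonneg _) hC.le (euclNorm_nonneg _) (hNQle ξ) (by linarith)
    have : c * euclNorm (hQ.sqrt *ᵥ ξ) ^ (ψ - 1) ≤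
        C ^ ((ψ - 1) / 2) * c * euclNorm (hH.sqrt *ᵥ ξ) ^ (ψ - 1) := by
      calc c * euclNorm (hQ.sqrt *ᵥ ξ) ^ (ψ - 1) ≤
          c * (C ^ ((ψ - 1) / 2) * euclNorm (hH.sqrt *ᵥ ξ) ^ (ψ - 1)) :=
            mul_le_mul_of_nonneg_left hNQψ hc
        _ = C ^ ((ψ - 1) / 2) * c * euclNorm (hH.sqrt *ᵥ ξ) ^ (ψ - 1) := by ring
    linarith
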